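/- For any weak composition nu = (nu_1,...,nu_n) of m, there is an invertible Z-linear transformation of R^{m+n+1} taking the homogenized nu-arrangement H_nu to the graphic hyperplane arrangement of the Ferrers graph G_nu (with one additional isolated vertex). Consequently the intersection lattice of H_nu is isomorphic to the bond lattice of G_nu. -/

import Mathlib

attribute [local instance] Classical.propDecidable

noncomputable section

/-- The homogenized `ν`-arrangement `H_ν` in `ℝ^{m+n+1}`: the coordinates are
`x_1, …, x_{n+1}` (indexed by `Fin (n+1)`) and `y_i^{(ℓ)}` for `i : Fin n`,
`ℓ : Fin (ν i)`, and the hyperplanes are `x_i - x_j = y_i^{(ℓ)}` for `i < j`. -/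
def homogenizedArrangement (n : ℕ) (ν : Fin n → ℕ) :
    Set (Set ((Fin (n + 1) ⊕ (Σ i : Fin n, Fin (ν i))) → ℝ)) :=
  {H | ∃ (i : Fin n) (j : Fin (n + 1)) (l : Fin (ν i)), (i : ℕ) < (j : ℕ) ∧
    H = {w | w (Sum.inl i.castSucc) - w (Sum.inl j) = w (Sum.inr ⟨i, l⟩)}}

/-- The graphic arrangement of the Ferrers graph `G_ν` (together with one extra
isolated vertex): the vertices are the columns `(2i-1)^{(ℓ)}`, the rows
`2, 4, …, 2n`, and the isolated vertex, and the hyperplanes are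
`x_{(2i-1)^{(ℓ)}} = x_{2j}` for `2i - 1 < 2j`, i.e. `i ≤ j` (`0`-indexed). -/
def ferrersGraphicArrangement (n : ℕ) (ν : Fin n → ℕ) :
    Set (Set ((((Σ i : Fin n, Fin (ν i)) ⊕ Fin n) ⊕ Unit) → ℝ)) :=
  {H | ∃ (i : Fin n) (l : Fin (ν i)) (j : Fin n), (i : ℕ) ≤ (j : ℕ) ∧
    H = {w | w (Sum.inl (Sum.inl ⟨i, l⟩)) = w (Sum.inl (Sum.inr j))}}

/-- The intersection poset of an arrangement: all nonempty intersections of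
subfamilies (including the ambient space, as the empty intersection), ordered by
inclusion (which is the reverse of the usual order on the intersection lattice). -/
def interPoset {X : Type*} (A : Set (Set X)) : Set (Set X) :=
  {s | s.Nonempty ∧ ∃ B ⊆ A, s = ⋂₀ B}

/- ### Auxiliary material -/

namespace HomogFerrers

variable {n : ℕ} {ν : Fin n → ℕ}

/-- Source coordinates. -/
abbrev Src (n : ℕ) (ν : Fin n → ℕ) := (Fin (n + 1) ⊕ (Σ i : Fin n, Fin (ν i))) → ℝ
/-- Target coordinates. -/
abbrev Tgt (n : ℕ) (ν : Fin n → ℕ) := (((Σ i : Fin n, Fin (ν i)) ⊕ Fin n) ⊕ Unit) → ℝ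

/-- Recover the `x`-coordinates from the target coordinates. -/
def xv (w : Tgt n ν) (k : Fin (n + 1)) : ℝ :=
  Fin.cases (w (Sum.inr ())) (fun j => w (Sum.inl (Sum.inr j))) k

def fwd (w : Src n ν) : Tgt n ν
  | Sum.inl (Sum.inl p) => w (Sum.inl p.1.castSucc) - w (Sum.inr p)
  | Sum.inl (Sum.inr j) => w (Sum.inl j.succ)
  | Sum.inr _ => w (Sum.inl 0)

def bwd (w : Tgt n ν) : Src n ν
  | Sum.inl k => xv w k
  | Sum.inr p => xv w p.1.castSucc - w (Sum.inl (Sum.inl p))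

lemma xv_fwd (w : Src n ν) (k : Fin (n + 1)) : xv (fwd w) k = w (Sum.inl k) := by
  induction k using Fin.cases with
  | zero => simp [xv, fwd]
  | succ j => simp [xv, fwd]

/-- The linear change of coordinates. -/
def phi (n : ℕ) (ν : Fin n → ℕ) : Src n ν ≃ₗ[ℝ] Tgt n ν where
  toFun := fwd
  invFun := bwd
  left_inv := by
    intro w
    funext z
    rcases z with k | p
    · simp [bwd, xv_fwd]
    · simp [bwd, fwd, xv_fwd]
  right_inv := by
    intro w
    funext z
    rcases z with (p | j) | u
    · simp [bwd, fwd]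
    · simp [bwd, fwd, xv]
    · simp [bwd, fwd, xv]
  map_add' := by
    intro x y
    funext z
    rcases z with (p | j) | u <;> simp [fwd] <;> ring
  map_smul' := by
    intro c x
    funext z
    rcases z with (p | j) | u <;> simp [fwd] <;> ring

lemma phi_symm_apply (w : Tgt n ν) (z) : (phi n ν).symm w z = bwd w z := rfl

lemma phi_apply (w : Src n ν) (z) : phi n ν w z = fwd w z := rfl

/-- Image of a single hyperplane. -/
lemma image_hyperplane (p : Σ i : Fin n, Fin (ν i)) (j : Fin n) :
    (⇑(phi n ν)) '' {w : Src n ν |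
        w (Sum.inl p.1.castSucc) - w (Sum.inl j.succ) = w (Sum.inr p)} =
      {w : Tgt n ν | w (Sum.inl (Sum.inl p)) = w (Sum.inl (Sum.inr j))} := by
  ext w'
  constructor
  · rintro ⟨w, hw, rfl⟩
    simp only [Set.mem_setOf_eq] at hw ⊢
    simp only [phi_apply, fwd]
    linarith
  · intro h
    simp only [Set.mem_setOf_eq] at h
    refine ⟨(phi n ν).symm w', ?_, (phi n ν).apply_symm_apply w'⟩
    simp only [Set.mem_setOf_eq, phi_symm_apply, bwd]
    have hx : xv w' j.succ = w' (Sum.inl (Sum.inr j)) := by simp [xv]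
    rw [hx]
    linarith

/-- Image of the whole arrangement. -/
lemma image_arrangement :
    (fun H => (⇑(phi n ν)) '' H) '' homogenizedArrangement n ν
      = ferrersGraphicArrangement n ν := by
  ext H'
  constructor
  · rintro ⟨H, ⟨i, j, l, hij, rfl⟩, rfl⟩
    have hj0 : j ≠ 0 := by
      intro h; rw [h] at hij; simp at hij
    have hsucc : (j.pred hj0).succ = j := Fin.succ_pred j hj0
    refine ⟨i, l, j.pred hj0, ?_, ?_⟩
    · have : ((j.pred hj0 : Fin n) : ℕ) = (j : ℕ) - 1 := Fin.coe_pred j hj0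
      omega
    · rw [← image_hyperplane ⟨i, l⟩ (j.pred hj0)]
      rw [hsucc]
  · rintro ⟨i, l, j, hij, rfl⟩
    refine ⟨_, ⟨i, j.succ, l, ?_, rfl⟩, image_hyperplane ⟨i, l⟩ j⟩
    simp only [Fin.val_succ]
    omega

lemma image_sInter {X Y : Type*} (e : X ≃ Y) (B : Set (Set X)) :
    ⇑e '' ⋂₀ B = ⋂₀ ((fun H => ⇑e '' H) '' B) := by
  rw [Set.sInter_image]
  ext y
  simp only [Set.mem_image, Set.mem_sInter, Set.mem_iInter]
  constructor
  · rintro ⟨x, hx, rfl⟩ b hb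
    exact ⟨x, hx b hb, rfl⟩
  · intro h
    refine ⟨e.symm y, ?_, e.apply_symm_apply y⟩
    intro b hb
    obtain ⟨x, hx, hxy⟩ := h b hb
    rwa [← hxy, e.symm_apply_apply]

lemma mem_interPoset_image {X Y : Type*} (e : X ≃ Y) (A : Set (Set X)) {s : Set X}
    (hs : s ∈ interPoset A) : ⇑e '' s ∈ interPoset ((fun H => ⇑e '' H) '' A) := by
  obtain ⟨hne, B, hB, rfl⟩ := hs
  exact ⟨hne.image e, (fun H => ⇑e '' H) '' B, Set.image_mono hB, image_sInter e B⟩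

lemma symm_image_image_arr {X Y : Type*} (e : X ≃ Y) (A : Set (Set X)) :
    (fun H => ⇑e.symm '' H) '' ((fun H => ⇑e '' H) '' A) = A := by
  rw [Set.image_image]
  simp only [Equiv.symm_image_image]
  exact Set.image_id A

/-- Transport of intersection posets along a bijection of the ambient space. -/
def interPosetOrderIso {X Y : Type*} (e : X ≃ Y) (A : Set (Set X)) :
    {s // s ∈ interPoset A} ≃o {s // s ∈ interPoset ((fun H => ⇑e '' H) '' A)} where
  toFun s := ⟨⇑e '' s.1, mem_interPoset_image e A s.2⟩
  invFun s := ⟨⇑e.symm '' s.1, by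
    have := mem_interPoset_image e.symm ((fun H => ⇑e '' H) '' A) s.2
    rwa [symm_image_image_arr e A] at this⟩
  left_inv s := by
    ext x
    simp [Equiv.symm_image_image]
  right_inv s := by
    ext y
    simp [Equiv.image_symm_image]
  map_rel_iff' := by
    intro s t
    exact Set.image_subset_image_iff e.injective

end HomogFerrers

/-- For any weak composition `ν` of `m`, there is an invertible `ℤ`-linear
transformation of `ℝ^{m+n+1}` carrying the homogenized `ν`-arrangement `H_ν` onto the
graphic arrangement of the Ferrers graph `G_ν` (with an extra isolated vertex);
consequently the intersection lattice of `H_ν` is isomorphic to the bond lattice of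
`G_ν` (the intersection lattice of its graphic arrangement). -/
theorem homogenizedArrangement_equiv_ferrersGraphic (n m : ℕ) (ν : Fin n → ℕ)
    (hν : ∑ i, ν i = m) :
    (∃ φ : ((Fin (n + 1) ⊕ (Σ i : Fin n, Fin (ν i))) → ℝ) ≃ₗ[ℝ]
        ((((Σ i : Fin n, Fin (ν i)) ⊕ Fin n) ⊕ Unit) → ℝ),
      (∀ w, (∀ i, ∃ z : ℤ, w i = (z : ℝ)) → ∀ j, ∃ z : ℤ, φ w j = (z : ℝ)) ∧
      (∀ w, (∀ j, ∃ z : ℤ, w j = (z : ℝ)) → ∀ i, ∃ z : ℤ, φ.symm w i = (z : ℝ)) ∧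
      (fun H => (⇑φ) '' H) '' homogenizedArrangement n ν = ferrersGraphicArrangement n ν) ∧
    Nonempty ({s // s ∈ interPoset (homogenizedArrangement n ν)} ≃o
      {s // s ∈ interPoset (ferrersGraphicArrangement n ν)}) := by
  classical
  refine ⟨⟨HomogFerrers.phi n ν, ?_, ?_, HomogFerrers.image_arrangement⟩, ?_⟩
  · intro w hw z
    rcases z with (p | j) | u
    · obtain ⟨a, ha⟩ := hw (Sum.inl p.1.castSucc)
      obtain ⟨b, hb⟩ := hw (Sum.inr p)
      exact ⟨a - b, by simp [HomogFerrers.phi_apply, HomogFerrers.fwd, ha, hb]⟩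
    · obtain ⟨a, ha⟩ := hw (Sum.inl j.succ)
      exact ⟨a, by simp [HomogFerrers.phi_apply, HomogFerrers.fwd, ha]⟩
    · obtain ⟨a, ha⟩ := hw (Sum.inl 0)
      exact ⟨a, by simp [HomogFerrers.phi_apply, HomogFerrers.fwd, ha]⟩
  · intro w hw z
    have hxv : ∀ k : Fin (n + 1), ∃ a : ℤ, HomogFerrers.xv w k = (a : ℝ) := by
      intro k
      induction k using Fin.cases with
      | zero => obtain ⟨a, ha⟩ := hw (Sum.inr ()); exact ⟨a, by simpa [HomogFerrers.xv] using ha⟩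
      | succ j =>
        obtain ⟨a, ha⟩ := hw (Sum.inl (Sum.inr j))
        exact ⟨a, by simpa [HomogFerrers.xv] using ha⟩
    rcases z with k | p
    · obtain ⟨a, ha⟩ := hxv k
      exact ⟨a, by simpa [HomogFerrers.phi_symm_apply, HomogFerrers.bwd] using ha⟩
    · obtain ⟨a, ha⟩ := hxv p.1.castSucc
      obtain ⟨b, hb⟩ := hw (Sum.inl (Sum.inl p))
      exact ⟨a - b, by simp [HomogFerrers.phi_symm_apply, HomogFerrers.bwd, ha, hb]⟩
  · have h := HomogFerrers.interPosetOrderIso (HomogFerrers.phi n ν).toEquiv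
      (homogenizedArrangement n ν)
    have heq : (fun H => ⇑(HomogFerrers.phi n ν).toEquiv '' H) '' homogenizedArrangement n ν
        = ferrersGraphicArrangement n ν := by
      simpa using HomogFerrers.image_arrangement
    rw [heq] at h
    exact ⟨h⟩

end
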